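/- Participation bound for a non-optimal seller (third part of Lemma 9): let T, N, M ≥ 1 and 0 ≤ K* ≤ N be integers, and for each round t ∈ {1,…,T} let P_b(t) ⊆ {1,…,N} and P_s(t) ⊆ {1,…,M} with counters n_{b,i}(t) := #{t' ≤ t : i ∈ P_b(t')} and n_{s,j}(t) := #{t' ≤ t : j ∈ P_s(t')}. Fix a seller j, a nonnegative real Th_j, and nonnegative reals Th_{j,i'} for each buyer i' ∈ {K*+1,…,N}. Assume that for every round t with j ∈ P_s(t), either n_{s,j}(t) ≤ Th_j, or there exists a buyer i' ∈ {K*+1,…,N} with i' ∈ P_b(t) and n_{b,i'}(t) ≤ Th_{j,i'}. Then n_{s,j}(T) ≤ Th_j + Σ_{i'=K*+1}^{N} Th_{j,i'}. -/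

import Mathlib

/-- Auxiliary: if on a set `S ⊆ [1,T]` agent `i` participates in every round of `S`
and its counter is at most `Th` in every round of `S`, then `|S| ≤ Th`. -/
lemma stmt_10_aux (T i : ℕ) (P : ℕ → Finset ℕ) (Th : ℝ) (hTh : 0 ≤ Th)
    (S : Finset ℕ) (hS : S ⊆ Finset.Icc 1 T)
    (hmem : ∀ t ∈ S, i ∈ P t)
    (hcnt : ∀ t ∈ S, (((Finset.Icc 1 t).filter fun t' => i ∈ P t').card : ℝ) ≤ Th) :
    (S.card : ℝ) ≤ Th := by
  classical
  set g : ℕ → ℕ := fun t => ((Finset.Icc 1 t).filter fun t' => i ∈ P t').card with hg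
  have hmono : ∀ t₁ ∈ S, ∀ t₂ ∈ S, t₁ < t₂ → g t₁ < g t₂ := by
    intro t₁ h₁ t₂ h₂ hlt
    apply Finset.card_lt_card
    constructor
    · intro x hx
      simp only [Finset.mem_filter, Finset.mem_Icc] at hx ⊢
      exact ⟨⟨hx.1.1, hx.1.2.trans hlt.le⟩, hx.2⟩
    · intro hsub
      have ht₂ : t₂ ∈ (Finset.Icc 1 t₂).filter fun t' => i ∈ P t' := by
        have := hS h₂
        simp only [Finset.mem_Icc] at this
        simp only [Finset.mem_filter, Finset.mem_Icc]
        exact ⟨⟨this.1, le_refl _⟩, hmem t₂ h₂⟩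
      have := hsub ht₂
      simp only [Finset.mem_filter, Finset.mem_Icc] at this
      omega
  have hinj : Set.InjOn g S := by
    intro t₁ h₁ t₂ h₂ heq
    by_contra hne
    rcases Nat.lt_or_ge t₁ t₂ with h | h
    · exact absurd heq (hmono t₁ h₁ t₂ h₂ h).ne
    · exact absurd heq.symm (hmono t₂ h₂ t₁ h₁ (lt_of_le_of_ne h (Ne.symm hne))).ne
  have hmaps : ∀ t ∈ S, g t ∈ Finset.Icc 1 ⌊Th⌋₊ := by
    intro t ht
    have h1 : 1 ≤ g t := by
      apply Finset.card_pos.mpr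
      refine ⟨t, ?_⟩
      have := hS ht
      simp only [Finset.mem_Icc] at this
      simp only [Finset.mem_filter, Finset.mem_Icc]
      exact ⟨⟨this.1, le_refl _⟩, hmem t ht⟩
    have h2 : g t ≤ ⌊Th⌋₊ := Nat.le_floor (hcnt t ht)
    simp only [Finset.mem_Icc]
    exact ⟨h1, h2⟩
  have hcard : S.card ≤ ⌊Th⌋₊ := by
    have := Finset.card_le_card_of_injOn g hmaps hinj
    simpa using this
  calc (S.card : ℝ) ≤ (⌊Th⌋₊ : ℝ) := by exact_mod_cast hcard
    _ ≤ Th := Nat.floor_le hTh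


/-- Participation bound for a non-optimal seller: if in every round in
which seller `j` participates either its own counter is at most `Thj`, or some optimal
non-participating buyer `i' ∈ {Kstar+1,…,N}` participates with counter at most
`Th i'`, then the total number of participations of seller `j` is at most
`Thj + Σ_{i' = Kstar+1}^{N} Th i'`. -/
theorem stmt_10 (T N M Kstar : ℕ) (hT : 1 ≤ T) (hN : 1 ≤ N) (hM : 1 ≤ M) (hK : Kstar ≤ N)
    (Pb Ps : ℕ → Finset ℕ)
    (hPb : ∀ t ∈ Finset.Icc 1 T, Pb t ⊆ Finset.Icc 1 N)
    (hPs : ∀ t ∈ Finset.Icc 1 T, Ps t ⊆ Finset.Icc 1 M)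
    (j : ℕ) (Thj : ℝ) (hThj : 0 ≤ Thj)
    (Th : ℕ → ℝ) (hTh : ∀ i' ∈ Finset.Icc (Kstar + 1) N, 0 ≤ Th i')
    (hmain : ∀ t ∈ Finset.Icc 1 T, j ∈ Ps t →
      ((((Finset.Icc 1 t).filter fun t' => j ∈ Ps t').card : ℝ) ≤ Thj) ∨
      ∃ i' ∈ Finset.Icc (Kstar + 1) N, i' ∈ Pb t ∧
        (((Finset.Icc 1 t).filter fun t' => i' ∈ Pb t').card : ℝ) ≤ Th i') :
    (((Finset.Icc 1 T).filter fun t => j ∈ Ps t).card : ℝ)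
      ≤ Thj + ∑ i' ∈ Finset.Icc (Kstar + 1) N, Th i' := by
  classical
  set S : Finset ℕ := (Finset.Icc 1 T).filter (fun t => j ∈ Ps t) with hSdef
  set S0 : Finset ℕ := S.filter
    (fun t => (((Finset.Icc 1 t).filter fun t' => j ∈ Ps t').card : ℝ) ≤ Thj) with hS0
  set Si : ℕ → Finset ℕ := fun i => (Finset.Icc 1 T).filter
    (fun t => i ∈ Pb t ∧ (((Finset.Icc 1 t).filter fun t' => i ∈ Pb t').card : ℝ) ≤ Th i)
    with hSi
  have hsub : S ⊆ S0 ∪ (Finset.Icc (Kstar+1) N).biUnion Si := by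
    intro t ht
    have ht' := ht
    simp only [hSdef, Finset.mem_filter] at ht'
    rcases hmain t ht'.1 ht'.2 with h | ⟨i', hi', hpb, hc⟩
    · exact Finset.mem_union_left _ (Finset.mem_filter.mpr ⟨ht, h⟩)
    · refine Finset.mem_union_right _ (Finset.mem_biUnion.mpr ⟨i', hi', ?_⟩)
      exact Finset.mem_filter.mpr ⟨ht'.1, hpb, hc⟩
  have hcard : S.card ≤ S0.card + ∑ i ∈ Finset.Icc (Kstar+1) N, (Si i).card := by
    calc S.card ≤ (S0 ∪ (Finset.Icc (Kstar+1) N).biUnion Si).card :=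
          Finset.card_le_card hsub
      _ ≤ S0.card + ((Finset.Icc (Kstar+1) N).biUnion Si).card :=
          Finset.card_union_le _ _
      _ ≤ S0.card + ∑ i ∈ Finset.Icc (Kstar+1) N, (Si i).card :=
          add_le_add_right (Finset.card_biUnion_le) _
  have h0 : (S0.card : ℝ) ≤ Thj := by
    apply stmt_10_aux T j Ps Thj hThj
    · intro t ht
      simp only [hS0, hSdef, Finset.mem_filter] at ht
      exact Finset.mem_Icc.mpr (Finset.mem_Icc.mp ht.1.1)
    · intro t ht
      simp only [hS0, hSdef, Finset.mem_filter] at ht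
      exact ht.1.2
    · intro t ht
      simp only [hS0, hSdef, Finset.mem_filter] at ht
      exact ht.2
  have hi : ∀ i ∈ Finset.Icc (Kstar+1) N, ((Si i).card : ℝ) ≤ Th i := by
    intro i hiN
    apply stmt_10_aux T i Pb (Th i) (hTh i hiN)
    · intro t ht
      simp only [hSi, Finset.mem_filter] at ht
      exact ht.1
    · intro t ht
      simp only [hSi, Finset.mem_filter] at ht
      exact ht.2.1
    · intro t ht
      simp only [hSi, Finset.mem_filter] at ht
      exact ht.2.2
  calc (S.card : ℝ) ≤ (S0.card : ℝ) + ∑ i ∈ Finset.Icc (Kstar+1) N, ((Si i).card : ℝ) := by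
        push_cast [← Nat.cast_sum]
        exact_mod_cast hcard
    _ ≤ Thj + ∑ i ∈ Finset.Icc (Kstar+1) N, Th i :=
        add_le_add h0 (Finset.sum_le_sum hi)
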